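/- Let v₁,…,vₙ ∈ ℚᵏ and r₁,…,rₙ ∈ ℚ, and let S = {x ∈ ℚᵏ : 0 ≤ vᵢ·x + rᵢ for all i = 1,…,n}. If S is empty, then there exist nonnegative rationals q₁,…,qₙ such that Σᵢ qᵢvᵢ = 0 and Σᵢ qᵢrᵢ < 0. -/

import Mathlib

namespace FarkasAux

variable {ι : Type} [Fintype ι]

def Ext (a : ι → ℚ) (u : ι → ℚ) :
    {i : ι // a i = 0} ⊕ {i : ι // 0 < a i} × {i : ι // a i < 0} → ℚ :=
  Sum.elim (fun z => u z.1) (fun pm => u pm.1.1 / a pm.1.1 - u pm.2.1 / a pm.2.1)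

def qOf (a : ι → ℚ)
    (q' : {i : ι // a i = 0} ⊕ {i : ι // 0 < a i} × {i : ι // a i < 0} → ℚ) (i : ι) : ℚ :=
  if h0 : a i = 0 then q' (.inl ⟨i, h0⟩)
  else if hp : 0 < a i then (∑ m : {i : ι // a i < 0}, q' (.inr (⟨i, hp⟩, m))) / a i
  else (∑ p : {i : ι // 0 < a i},
      q' (.inr (p, ⟨i, lt_of_le_of_ne (not_lt.1 hp) h0⟩))) / (-a i)

lemma qOf_nonneg (a : ι → ℚ) (q') (hq' : ∀ i', 0 ≤ q' i') (i : ι) : 0 ≤ qOf a q' i := by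
  unfold qOf
  split_ifs with h0 hp
  · exact hq' _
  · exact div_nonneg (Finset.sum_nonneg fun m _ => hq' _) hp.le
  · exact div_nonneg (Finset.sum_nonneg fun p _ => hq' _)
      (by simpa using (lt_of_le_of_ne (not_lt.1 hp) h0).le)

lemma qOf_zero (a : ι → ℚ) (q') (z : {i : ι // a i = 0}) : qOf a q' z.1 = q' (.inl z) := by
  unfold qOf; rw [dif_pos z.2]

lemma qOf_pos (a : ι → ℚ) (q') (p : {i : ι // 0 < a i}) :
    qOf a q' p.1 = (∑ m : {i : ι // a i < 0}, q' (.inr (p, m))) / a p.1 := by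
  unfold qOf; rw [dif_neg p.2.ne', dif_pos p.2]

lemma qOf_neg (a : ι → ℚ) (q') (m : {i : ι // a i < 0}) :
    qOf a q' m.1 = (∑ p : {i : ι // 0 < a i}, q' (.inr (p, m))) / (-a m.1) := by
  unfold qOf; rw [dif_neg m.2.ne, dif_neg (not_lt_of_gt m.2)]

lemma sum_split (a : ι → ℚ) (f : ι → ℚ) :
    ∑ i, f i = (∑ z : {i : ι // a i = 0}, f z.1) +
      ((∑ p : {i : ι // 0 < a i}, f p.1) + (∑ m : {i : ι // a i < 0}, f m.1)) := by
  have h : ∀ i : ι, f i = (if a i = 0 then f i else 0) +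
      ((if 0 < a i then f i else 0) + (if a i < 0 then f i else 0)) := by
    intro i
    rcases lt_trichotomy (a i) 0 with h | h | h
    · simp [h, h.ne, not_lt_of_gt h, asymm h]
    · simp [h]
    · simp [h, h.ne', not_lt_of_gt h, asymm h]
  rw [Finset.sum_congr rfl (fun i _ => h i), Finset.sum_add_distrib, Finset.sum_add_distrib]
  congr 1
  · rw [← Finset.sum_filter, Finset.sum_subtype (p := fun i => a i = 0) _ (by simp) f]
  congr 1
  · rw [← Finset.sum_filter, Finset.sum_subtype (p := fun i => 0 < a i) _ (by simp) f]
  · rw [← Finset.sum_filter, Finset.sum_subtype (p := fun i => a i < 0) _ (by simp) f]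

lemma key (a : ι → ℚ) (q') (u : ι → ℚ) :
    ∑ i, qOf a q' i * u i = ∑ i', q' i' * Ext a u i' := by
  rw [Fintype.sum_sum_type, Fintype.sum_prod_type,
    sum_split a (fun i => qOf a q' i * u i)]
  congr 1
  · exact Finset.sum_congr rfl fun z _ => by rw [qOf_zero]; rfl
  have hP : (∑ p : {i : ι // 0 < a i}, qOf a q' p.1 * u p.1) =
      ∑ p : {i : ι // 0 < a i}, ∑ m : {i : ι // a i < 0},
        q' (.inr (p, m)) * (u p.1 / a p.1) := by
    refine Finset.sum_congr rfl fun p _ => ?_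
    rw [qOf_pos, div_mul_eq_mul_div, Finset.sum_mul, Finset.sum_div]
    exact Finset.sum_congr rfl fun m _ => by rw [mul_div_assoc]
  have hN : (∑ m : {i : ι // a i < 0}, qOf a q' m.1 * u m.1) =
      ∑ m : {i : ι // a i < 0}, ∑ p : {i : ι // 0 < a i},
        -(q' (.inr (p, m)) * (u m.1 / a m.1)) := by
    refine Finset.sum_congr rfl fun m _ => ?_
    rw [qOf_neg, div_neg, neg_mul, div_mul_eq_mul_div, Finset.sum_mul, Finset.sum_div,
      ← Finset.sum_neg_distrib]
    exact Finset.sum_congr rfl fun p _ => by rw [mul_div_assoc]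
  rw [Finset.sum_comm] at hN
  rw [hP, hN, ← Finset.sum_add_distrib]
  refine Finset.sum_congr rfl fun p _ => ?_
  rw [← Finset.sum_add_distrib]
  refine Finset.sum_congr rfl fun m _ => ?_
  show _ = q' (Sum.inr (p, m)) * (u p.1 / a p.1 - u m.1 / a m.1)
  ring

set_option maxHeartbeats 1600000 in
theorem aux : ∀ (k : ℕ) (ι : Type) [Fintype ι] (v : ι → Fin k → ℚ) (r : ι → ℚ),
    (¬ ∃ x : Fin k → ℚ, ∀ i : ι, 0 ≤ (∑ j, v i j * x j) + r i) →
    ∃ q : ι → ℚ, (∀ i, 0 ≤ q i) ∧ (∀ j, ∑ i, q i * v i j = 0) ∧ ∑ i, q i * r i < 0 := by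
  intro k
  induction k with
  | zero =>
    intro ι _ v r hS
    classical
    push_neg at hS
    obtain ⟨i, hi⟩ := hS (fun _ => 0)
    refine ⟨fun i' => if i' = i then 1 else 0, fun i' => by by_cases h : i' = i <;> simp [h],
      fun j => j.elim0, ?_⟩
    have : ∑ i' : ι, (if i' = i then (1 : ℚ) else 0) * r i' = r i := by
      simp [ite_mul]
    rw [this]
    simpa using hi
  | succ k ih =>
    intro ι _ v r hS
    set a : ι → ℚ := fun i => v i (Fin.last k) with ha
    set w : ι → Fin k → ℚ := fun i j => v i j.castSucc with hw
    set v' : ({i : ι // a i = 0} ⊕ {i : ι // 0 < a i} × {i : ι // a i < 0}) → Fin k → ℚ :=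
      fun i' j => Ext a (fun i => w i j) i' with hv'
    -- the reduced system is infeasible
    have hS' : ¬ ∃ y : Fin k → ℚ, ∀ i', 0 ≤ (∑ j, v' i' j * y j) + Ext a r i' := by
      rintro ⟨y, hy⟩
      apply hS
      set c : ι → ℚ := fun i => (∑ j, w i j * y j) + r i with hc
      have hcZ : ∀ z : {i : ι // a i = 0}, 0 ≤ c z.1 := by
        intro z
        simpa [v', Ext, c] using hy (.inl z)
      have hcPN : ∀ (p : {i : ι // 0 < a i}) (m : {i : ι // a i < 0}),
          c m.1 / a m.1 ≤ c p.1 / a p.1 := by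
        intro p m
        have h := hy (.inr (p, m))
        have halg : (∑ j, v' (.inr (p, m)) j * y j) + Ext a r (.inr (p, m))
            = c p.1 / a p.1 - c m.1 / a m.1 := by
          simp only [v', Ext, Sum.elim_inr, sub_mul, Finset.sum_sub_distrib,
            div_mul_eq_mul_div, ← Finset.sum_div, c, add_div]
          ring
        rw [halg] at h
        linarith
      -- choose the last coordinate
      have hgoal : ∀ xv : ℚ, (∀ i, 0 ≤ a i * xv + c i) →
          ∃ x : Fin (k+1) → ℚ, ∀ i : ι, 0 ≤ (∑ j, v i j * x j) + r i := by
        intro xv hxv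
        refine ⟨Fin.snoc y xv, fun i => ?_⟩
        have : (∑ j : Fin (k+1), v i j * (Fin.snoc y xv : Fin (k+1) → ℚ) j) + r i
            = a i * xv + c i := by
          rw [Fin.sum_univ_castSucc]
          simp only [Fin.snoc_castSucc, Fin.snoc_last, c, w, a]
          ring
        rw [this]; exact hxv i
      rcases isEmpty_or_nonempty {i : ι // a i < 0} with hN | hN
      · rcases isEmpty_or_nonempty {i : ι // 0 < a i} with hP | hP
        · refine hgoal 0 fun i => ?_
          have h0 : a i = 0 := by
            rcases lt_trichotomy (a i) 0 with h | h | h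
            · exact ((not_nonempty_iff.2 hN) ⟨⟨i, h⟩⟩).elim
            · exact h
            · exact ((not_nonempty_iff.2 hP) ⟨⟨i, h⟩⟩).elim
          simpa [h0] using hcZ ⟨i, h0⟩
        · refine hgoal (Finset.univ.sup' Finset.univ_nonempty
            (fun p : {i : ι // 0 < a i} => -c p.1 / a p.1)) fun i => ?_
          rcases lt_trichotomy (a i) 0 with h | h | h
          · exact ((not_nonempty_iff.2 hN) ⟨⟨i, h⟩⟩).elim
          · simpa [h] using hcZ ⟨i, h⟩
          · have hle : -c i / a i ≤ Finset.univ.sup' Finset.univ_nonempty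
                (fun p : {i : ι // 0 < a i} => -c p.1 / a p.1) :=
              Finset.le_sup' (b := ⟨i, h⟩)
                (fun p : {i : ι // 0 < a i} => -c p.1 / a p.1) (Finset.mem_univ (⟨i, h⟩ : {i : ι // 0 < a i}))
            rw [div_le_iff₀ h] at hle
            nlinarith
      · refine hgoal (Finset.univ.inf' Finset.univ_nonempty
          (fun m : {i : ι // a i < 0} => -c m.1 / a m.1)) fun i => ?_
        rcases lt_trichotomy (a i) 0 with h | h | h
        · have hle : Finset.univ.inf' Finset.univ_nonempty
              (fun m : {i : ι // a i < 0} => -c m.1 / a m.1) ≤ -c i / a i :=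
            Finset.inf'_le (b := ⟨i, h⟩)
              (fun m : {i : ι // a i < 0} => -c m.1 / a m.1) (Finset.mem_univ (⟨i, h⟩ : {i : ι // a i < 0}))
          rw [le_div_iff_of_neg h] at hle
          nlinarith
        · simpa [h] using hcZ ⟨i, h⟩
        · have hle : -c i / a i ≤ Finset.univ.inf' Finset.univ_nonempty
              (fun m : {i : ι // a i < 0} => -c m.1 / a m.1) :=
            Finset.le_inf' _ _ fun m _ => by
              rw [neg_div, neg_div]
              exact neg_le_neg (hcPN ⟨i, h⟩ m)
          rw [div_le_iff₀ h] at hle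
          nlinarith
    obtain ⟨q', hq'0, hq'v, hq'r⟩ := ih _ v' (Ext a r) hS'
    refine ⟨qOf a q', qOf_nonneg a q' hq'0, ?_, ?_⟩
    · intro j
      refine Fin.lastCases ?_ (fun j => ?_) j
      · have hz : ∀ i', q' i' * Ext a a i' = 0 := by
          rintro (z | ⟨p, m⟩)
          · simp [Ext, z.2]
          · simp [Ext, div_self p.2.ne', div_self m.2.ne]
        calc ∑ i, qOf a q' i * v i (Fin.last k) = ∑ i', q' i' * Ext a a i' := key a q' a
        _ = 0 := by rw [Finset.sum_congr rfl fun i' _ => hz i']; simp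
      · calc ∑ i, qOf a q' i * v i j.castSucc
            = ∑ i', q' i' * Ext a (fun i => w i j) i' := key a q' _
        _ = 0 := hq'v j
    · calc ∑ i, qOf a q' i * r i = ∑ i', q' i' * Ext a r i' := key a q' r
      _ < 0 := hq'r

end FarkasAux

theorem farkas_infeasible (k n : ℕ) (v : Fin n → Fin k → ℚ) (r : Fin n → ℚ)
    (hS : ¬ ∃ x : Fin k → ℚ, ∀ i : Fin n, 0 ≤ (∑ j : Fin k, v i j * x j) + r i) :
    ∃ q : Fin n → ℚ, (∀ i : Fin n, 0 ≤ q i) ∧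
      (∑ i : Fin n, q i • v i) = 0 ∧ (∑ i : Fin n, q i * r i) < 0 := by
  obtain ⟨q, hq0, hqv, hqr⟩ := FarkasAux.aux k (Fin n) v r hS
  refine ⟨q, hq0, ?_, hqr⟩
  funext j
  simpa [Finset.sum_apply] using hqv j
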